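/- Let K be a field, let X1,Y1,X2,Y2,X3,Y3,X4,Y4 ∈ K^3 be coefficient vectors of linear forms on K^3, and let λ ∈ K. Assume the quadratic-form identity λ^2·ℓ_{X1}(v)·ℓ_{Y1}(v) + ℓ_{X2}(v)·ℓ_{Y2}(v) + λ·ℓ_{X3}(v)·ℓ_{Y3}(v) = ℓ_{X4}(v)·ℓ_{Y4}(v) for all v ∈ K^3. Then the following three equalities of products of determinants hold: (X3 X1 X2)(Y3 X1 X2)·(X4 X1 Y2)(Y4 X1 Y2) = (X4 X1 X2)(Y4 X1 X2)·(X3 X1 Y2)(Y3 X1 Y2); (X3 X1 X2)(Y3 X1 X2)·(X4 X2 Y1)(Y4 X2 Y1) = (X4 X1 X2)(Y4 X1 X2)·(X3 X2 Y1)(Y3 X2 Y1); and (X3 X1 X2)(Y3 X1 X2)·(X4 Y1 Y2)(Y4 Y1 Y2) = (X4 X1 X2)(Y4 X1 X2)·(X3 Y1 Y2)(Y3 Y1 Y2). (This is the determinant identity of Theorem 5.1 on four pairs of bitangent lines in a common Steiner complex, written without denominators.) -/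
import Mathlib


open Matrix

/-- The determinant of the 3×3 matrix with rows A, B, C. -/
def det3 {K : Type*} [Field K] (A B C : Fin 3 → K) : K :=
  Matrix.det (Matrix.of ![A, B, C])

/-- Cross product of two vectors in `Fin 3 → K`. -/
def cross3 {K : Type*} [Field K] (A B : Fin 3 → K) : Fin 3 → K :=
  ![A 1 * B 2 - A 2 * B 1, A 2 * B 0 - A 0 * B 2, A 0 * B 1 - A 1 * B 0]

lemma dot_cross3 {K : Type*} [Field K] (X A B : Fin 3 → K) :
    X ⬝ᵥ cross3 A B = det3 X A B := by
  simp [cross3, det3, dotProduct, Fin.sum_univ_three, Matrix.det_fin_three]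
  ring

lemma det3_self₁ {K : Type*} [Field K] (A B : Fin 3 → K) : det3 A A B = 0 := by
  simp [det3, Matrix.det_fin_three]
  ring

lemma det3_self₂ {K : Type*} [Field K] (A B : Fin 3 → K) : det3 B A B = 0 := by
  simp [det3, Matrix.det_fin_three]
  ring

/-- Theorem 5.1 (without denominators): for four pairs of bitangent lines in a
common Steiner complex (degenerate conics in a pencil), the indicated products of
determinants of coefficient vectors agree. -/
theorem steiner_complex_det_identities {K : Type*} [Field K]
    (X1 Y1 X2 Y2 X3 Y3 X4 Y4 : Fin 3 → K) (lam : K)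
    (hpencil : ∀ v : Fin 3 → K,
      lam ^ 2 * ((X1 ⬝ᵥ v) * (Y1 ⬝ᵥ v)) + (X2 ⬝ᵥ v) * (Y2 ⬝ᵥ v)
        + lam * ((X3 ⬝ᵥ v) * (Y3 ⬝ᵥ v)) = (X4 ⬝ᵥ v) * (Y4 ⬝ᵥ v)) :
    det3 X3 X1 X2 * det3 Y3 X1 X2 * (det3 X4 X1 Y2 * det3 Y4 X1 Y2) =
      det3 X4 X1 X2 * det3 Y4 X1 X2 * (det3 X3 X1 Y2 * det3 Y3 X1 Y2) ∧
    det3 X3 X1 X2 * det3 Y3 X1 X2 * (det3 X4 X2 Y1 * det3 Y4 X2 Y1) =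
      det3 X4 X1 X2 * det3 Y4 X1 X2 * (det3 X3 X2 Y1 * det3 Y3 X2 Y1) ∧
    det3 X3 X1 X2 * det3 Y3 X1 X2 * (det3 X4 Y1 Y2 * det3 Y4 Y1 Y2) =
      det3 X4 X1 X2 * det3 Y4 X1 X2 * (det3 X3 Y1 Y2 * det3 Y3 Y1 Y2) := by
  have h12 := hpencil (cross3 X1 X2)
  have h1Y2 := hpencil (cross3 X1 Y2)
  have h2Y1 := hpencil (cross3 X2 Y1)
  have hY12 := hpencil (cross3 Y1 Y2)
  simp only [dot_cross3, det3_self₁, det3_self₂, zero_mul, mul_zero, add_zero,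
    zero_add] at h12 h1Y2 h2Y1 hY12
  refine ⟨?_, ?_, ?_⟩
  · linear_combination (det3 X3 X1 Y2 * det3 Y3 X1 Y2) * h12 -
      (det3 X3 X1 X2 * det3 Y3 X1 X2) * h1Y2
  · linear_combination (det3 X3 X2 Y1 * det3 Y3 X2 Y1) * h12 -
      (det3 X3 X1 X2 * det3 Y3 X1 X2) * h2Y1
  · linear_combination (det3 X3 Y1 Y2 * det3 Y3 Y1 Y2) * h12 -
      (det3 X3 X1 X2 * det3 Y3 X1 X2) * hY12
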